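/- Every commutative post-Lie algebra structure ∘ on W(a,b) (for any a,b ∈ ℂ) is trivial: x ∘ y = 0 for all x,y ∈ W(a,b). -/

import Mathlib

/-- A model of the Lie algebra `W(a,b)`: a complex Lie algebra with a basis
`{L m, I m | m : ℤ}` satisfying the defining bracket relations. -/
structure IsWab (a b : ℂ) (W : Type*) [LieRing W] [LieAlgebra ℂ W]
    (L I : ℤ → W) : Prop where
  bracket_LL : ∀ m n : ℤ, ⁅L m, L n⁆ = ((m - n : ℤ) : ℂ) • L (m + n)
  bracket_LI : ∀ m n : ℤ, ⁅L m, I n⁆ = (-((n : ℂ) + a + b * (m : ℂ))) • I (m + n)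
  bracket_II : ∀ m n : ℤ, ⁅I m, I n⁆ = 0
  basis : ∃ B : Module.Basis (ℤ ⊕ ℤ) ℂ W,
    (∀ m : ℤ, B (Sum.inl m) = L m) ∧ (∀ m : ℤ, B (Sum.inr m) = I m)


namespace CPAWab

variable {W : Type*} [LieRing W] [LieAlgebra ℂ W]

structure Hyp (a b : ℂ) (L I : ℤ → W) (B : Module.Basis (ℤ ⊕ ℤ) ℂ W)
    (mul : W →ₗ[ℂ] W →ₗ[ℂ] W) : Prop where
  bLL : ∀ m n : ℤ, ⁅L m, L n⁆ = ((m - n : ℤ) : ℂ) • L (m + n)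
  bLI : ∀ m n : ℤ, ⁅L m, I n⁆ = (-((n : ℂ) + a + b * (m : ℂ))) • I (m + n)
  bII : ∀ m n : ℤ, ⁅I m, I n⁆ = 0
  hBL : ∀ m : ℤ, B (Sum.inl m) = L m
  hBI : ∀ m : ℤ, B (Sum.inr m) = I m
  comm : ∀ x y, mul x y = mul y x
  post1 : ∀ x y z, mul ⁅x, y⁆ z = mul x (mul y z) - mul y (mul x z)
  post2 : ∀ x y z, mul x ⁅y, z⁆ = ⁅mul x y, z⁆ + ⁅y, mul x z⁆

noncomputable def cL (B : Module.Basis (ℤ ⊕ ℤ) ℂ W) (j : ℤ) : W →ₗ[ℂ] ℂ := B.coord (Sum.inl j)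
noncomputable def cI (B : Module.Basis (ℤ ⊕ ℤ) ℂ W) (j : ℤ) : W →ₗ[ℂ] ℂ := B.coord (Sum.inr j)

section
variable {a b : ℂ} {L I : ℤ → W} {B : Module.Basis (ℤ ⊕ ℤ) ℂ W} {mul : W →ₗ[ℂ] W →ₗ[ℂ] W}
variable (h : Hyp a b L I B mul)

include h

lemma cL_L (j t : ℤ) : cL B j (L t) = if t = j then 1 else 0 := by
  rw [← h.hBL, cL, Module.Basis.coord_apply, Module.Basis.repr_self, Finsupp.single_apply]
  simp [Sum.inl.injEq]

lemma cL_I (j t : ℤ) : cL B j (I t) = 0 := by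
  rw [← h.hBI, cL, Module.Basis.coord_apply, Module.Basis.repr_self, Finsupp.single_apply]
  simp

lemma cI_I (j t : ℤ) : cI B j (I t) = if t = j then 1 else 0 := by
  rw [← h.hBI, cI, Module.Basis.coord_apply, Module.Basis.repr_self, Finsupp.single_apply]
  simp [Sum.inr.injEq]

lemma cI_L (j t : ℤ) : cI B j (L t) = 0 := by
  rw [← h.hBL, cI, Module.Basis.coord_apply, Module.Basis.repr_self, Finsupp.single_apply]
  simp

omit h in
lemma ext_zero (x : W) (h1 : ∀ j, cL B j x = 0) (h2 : ∀ j, cI B j x = 0) : x = 0 := by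
  have : ∀ i, B.repr x i = B.repr (0 : W) i := by
    rintro (j | j)
    · simpa [cL] using h1 j
    · simpa [cI] using h2 j
  exact B.repr.injective (Finsupp.ext this)

/-- `cL j ⁅L m, x⁆ = (2m - j) * cL (j-m) x`. -/
lemma cL_br_L (m j : ℤ) (x : W) :
    cL B j ⁅L m, x⁆ = (2 * (m : ℂ) - (j : ℂ)) * cL B (j - m) x := by
  have key : (cL B j).comp (LieAlgebra.ad ℂ W (L m) : W →ₗ[ℂ] W)
      = (2 * (m : ℂ) - (j : ℂ)) • cL B (j - m) := by
    apply B.ext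
    rintro (t | t) <;>
      simp only [LinearMap.comp_apply, LinearMap.smul_apply, smul_eq_mul, h.hBL, h.hBI]
    · show cL B j ⁅L m, L t⁆ = _
      rw [h.bLL, map_smul, cL_L h, cL_L h, smul_eq_mul]
      by_cases ht : t = j - m
      · subst ht; rw [if_pos (by ring), if_pos rfl]; push_cast; ring
      · rw [if_neg (by omega), if_neg ht]; ring
    · show cL B j ⁅L m, I t⁆ = _
      rw [h.bLI, map_smul, cL_I h, cL_I h]; simp
  have := congrArg (fun f : W →ₗ[ℂ] ℂ => f x) key
  simpa using this

/-- `cI j ⁅L m, x⁆ = -((j-m) + a + b*m) * cI (j-m) x`. -/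
lemma cI_br_L (m j : ℤ) (x : W) :
    cI B j ⁅L m, x⁆ = (-(((j : ℂ) - m) + a + b * m)) * cI B (j - m) x := by
  have key : (cI B j).comp (LieAlgebra.ad ℂ W (L m) : W →ₗ[ℂ] W)
      = (-(((j : ℂ) - m) + a + b * m)) • cI B (j - m) := by
    apply B.ext
    rintro (t | t) <;>
      simp only [LinearMap.comp_apply, LinearMap.smul_apply, smul_eq_mul, h.hBL, h.hBI]
    · show cI B j ⁅L m, L t⁆ = _
      rw [h.bLL, map_smul, cI_L h, cI_L h]; simp
    · show cI B j ⁅L m, I t⁆ = _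
      rw [h.bLI, map_smul, cI_I h, cI_I h, smul_eq_mul]
      by_cases ht : t = j - m
      · subst ht; rw [if_pos (by ring), if_pos rfl]; push_cast; ring
      · rw [if_neg (by omega), if_neg ht]; ring
  have := congrArg (fun f : W →ₗ[ℂ] ℂ => f x) key
  simpa using this

/-- `cL j ⁅I m, x⁆ = 0`. -/
lemma cL_br_I (m j : ℤ) (x : W) : cL B j ⁅I m, x⁆ = 0 := by
  have key : (cL B j).comp (LieAlgebra.ad ℂ W (I m) : W →ₗ[ℂ] W) = 0 := by
    apply B.ext
    rintro (t | t) <;>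
      simp only [LinearMap.comp_apply, LinearMap.zero_apply, h.hBL, h.hBI]
    · show cL B j ⁅I m, L t⁆ = 0
      rw [← lie_skew, map_neg, h.bLI, map_smul, cL_I h]; simp
    · show cL B j ⁅I m, I t⁆ = 0
      rw [h.bII]; simp
  have := congrArg (fun f : W →ₗ[ℂ] ℂ => f x) key
  simpa using this

/-- `cI j ⁅I m, x⁆ = (m + a + b*(j-m)) * cL (j-m) x`. -/
lemma cI_br_I (m j : ℤ) (x : W) :
    cI B j ⁅I m, x⁆ = ((m : ℂ) + a + b * ((j : ℂ) - m)) * cL B (j - m) x := by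
  have key : (cI B j).comp (LieAlgebra.ad ℂ W (I m) : W →ₗ[ℂ] W)
      = ((m : ℂ) + a + b * ((j : ℂ) - m)) • cL B (j - m) := by
    apply B.ext
    rintro (t | t) <;>
      simp only [LinearMap.comp_apply, LinearMap.smul_apply, smul_eq_mul, h.hBL, h.hBI]
    · show cI B j ⁅I m, L t⁆ = _
      rw [← lie_skew, map_neg, h.bLI, map_smul, cI_I h, cL_L h, smul_eq_mul]
      by_cases ht : t = j - m
      · subst ht; rw [if_pos (by ring), if_pos rfl]; push_cast; ring
      · rw [if_neg (by omega), if_neg ht]; ring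
    · show cI B j ⁅I m, I t⁆ = _
      rw [h.bII, cL_I h]; simp
  have := congrArg (fun f : W →ₗ[ℂ] ℂ => f x) key
  simpa using this

/-- `(*)`: `mul ⁅x,y⁆ z = ⁅x, mul y z⁆ - ⁅y, mul x z⁆`. -/
lemma star (x y z : W) : mul ⁅x, y⁆ z = ⁅x, mul y z⁆ - ⁅y, mul x z⁆ := by
  rw [h.comm, h.post2, h.comm z x, h.comm z y, ← lie_skew (mul x z) y]
  abel

/-- `(★)`. -/
lemma starstar (x y z : W) :
    mul x (mul y z) - mul y (mul x z) = ⁅x, mul y z⁆ - ⁅y, mul x z⁆ := by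
  rw [← h.post1, star h]

/-- `S1`. -/
lemma S1 (m n : ℤ) (z : W) :
    ((m - n : ℤ) : ℂ) • mul (L (m + n)) z = ⁅L m, mul (L n) z⁆ - ⁅L n, mul (L m) z⁆ := by
  have := star h (L m) (L n) z
  rw [h.bLL, map_smul, LinearMap.smul_apply] at this
  exact this

/-- `S2`. -/
lemma S2 (m n : ℤ) (z : W) :
    (-((n : ℂ) + a + b * m)) • mul (I (m + n)) z
      = ⁅L m, mul (I n) z⁆ - ⁅I n, mul (L m) z⁆ := by
  have := star h (L m) (I n) z
  rw [h.bLI, map_smul, LinearMap.smul_apply] at this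
  exact this

/-- `F^L`: `(j - n - a) * cL j (mul (I n) z) = 0`. -/
lemma FL (n j : ℤ) (z : W) : ((j : ℂ) - n - a) * cL B j (mul (I n) z) = 0 := by
  have e := congrArg (cL B j) (S2 h 0 n z)
  simp only [map_smul, smul_eq_mul, map_sub, cL_br_L h, cL_br_I h, zero_add, sub_zero] at e
  push_cast at e
  linear_combination e

/-- `E^L`: `(m - j) * cL j (mul (L m) z) = (2m - j) * cL (j-m) (mul (L 0) z)`. -/
lemma EL (m j : ℤ) (z : W) :
    ((m : ℂ) - j) * cL B j (mul (L m) z)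
      = (2 * (m : ℂ) - j) * cL B (j - m) (mul (L 0) z) := by
  have e := congrArg (cL B j) (S1 h m 0 z)
  simp only [map_smul, smul_eq_mul, map_sub, cL_br_L h, add_zero, sub_zero] at e
  push_cast at e
  linear_combination e

omit h in
lemma exists_split (j : ℤ) : ∃ m' n' : ℤ, m' ≠ n' ∧ m' ≠ 0 ∧ n' ≠ 0 ∧ m' + n' = j := by
  rcases eq_or_ne j (-2) with rfl | h2
  · exact ⟨1, -3, by norm_num, by norm_num, by norm_num, by norm_num⟩
  · rcases eq_or_ne j (-1) with rfl | h1
    · exact ⟨1, -2, by norm_num, by norm_num, by norm_num, by norm_num⟩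
    · exact ⟨j + 1, -1, by omega, by omega, by omega, by omega⟩

omit h in
lemma exists_ne (i : ℤ) : ∃ m : ℤ, m ≠ 0 ∧ m ≠ i := by
  rcases eq_or_ne i 1 with rfl | hi
  · exact ⟨2, by norm_num, by norm_num⟩
  · exact ⟨1, by norm_num, fun hc => hi hc.symm⟩

omit h in
lemma csub_ne (x y : ℤ) (hxy : x ≠ y) : ((x : ℂ) - y) ≠ 0 := by
  intro hc
  exact hxy (by exact_mod_cast sub_eq_zero.mp hc)

/-- off-diagonal `C^L`. -/
lemma cL_II_ne (n k j : ℤ) (hnk : n ≠ k) : cL B j (mul (I n) (I k)) = 0 := by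
  have e1 := FL h n j (I k)
  have e2 := FL h k j (I n)
  rw [h.comm (I k) (I n)] at e2
  have key : ((k : ℂ) - n) * cL B j (mul (I n) (I k)) = 0 := by linear_combination e1 - e2
  exact (mul_eq_zero.mp key).resolve_left (csub_ne k n (Ne.symm hnk))

/-- all `C^L`. -/
lemma cL_II (n k j : ℤ) : cL B j (mul (I n) (I k)) = 0 := by
  rcases ne_or_eq n k with hnk | rfl
  · exact cL_II_ne h n k j hnk
  obtain ⟨m, hm0, hmj⟩ := exists_ne j
  have e := congrArg (cL B (j + m)) (S2 h m n (I n))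
  simp only [map_smul, smul_eq_mul, map_sub, cL_br_L h, cL_br_I h,
    add_sub_cancel_right] at e
  rw [cL_II_ne h (m + n) n (j + m) (by omega)] at e
  have key : ((m : ℂ) - j) * cL B j (mul (I n) (I n)) = 0 := by
    push_cast at e
    linear_combination -e
  exact (mul_eq_zero.mp key).resolve_left (csub_ne m j hmj)

/-- all `B^L`. -/
lemma cL_LI (k n j : ℤ) : cL B j (mul (L k) (I n)) = 0 := by
  have b1 : ∀ k' j' : ℤ, ((j' : ℂ) - n - a) * cL B j' (mul (L k') (I n)) = 0 := by
    intro k' j'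
    have e := FL h n j' (L k')
    rwa [h.comm (I n) (L k')] at e
  by_cases hja : ((j : ℂ) - n - a) = 0
  swap
  · exact (mul_eq_zero.mp (b1 k j)).resolve_left hja
  by_cases hjk : j = k
  · subst hjk
    obtain ⟨m', n', hmn, hm0, hn0, hsum⟩ := exists_split j
    have hvn : cL B n' (mul (L n') (I n)) = 0 := by
      refine (mul_eq_zero.mp (b1 n' n')).resolve_left ?_
      intro hc
      apply hm0
      have : (n' : ℂ) = (j : ℂ) := by linear_combination hc - hja
      have : n' = j := by exact_mod_cast this
      omega
    have hvm : cL B m' (mul (L m') (I n)) = 0 := by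
      refine (mul_eq_zero.mp (b1 m' m')).resolve_left ?_
      intro hc
      apply hn0
      have : (m' : ℂ) = (j : ℂ) := by linear_combination hc - hja
      have : m' = j := by exact_mod_cast this
      omega
    have e := congrArg (cL B j) (S1 h m' n' (I n))
    rw [hsum] at e
    simp only [map_smul, smul_eq_mul, map_sub, cL_br_L h] at e
    rw [show j - m' = n' by omega, show j - n' = m' by omega, hvn, hvm] at e
    have key : ((m' : ℂ) - n') * cL B j (mul (L j) (I n)) = 0 := by
      push_cast at e
      linear_combination e
    exact (mul_eq_zero.mp key).resolve_left (csub_ne m' n' hmn)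
  by_cases hk0 : k = 0
  · subst hk0
    obtain ⟨m', hm0, hmj⟩ := exists_ne j
    have hz : cL B (j + m') (mul (L m') (I n)) = 0 := by
      refine (mul_eq_zero.mp (b1 m' (j + m'))).resolve_left ?_
      intro hc
      apply hm0
      have : (m' : ℂ) = 0 := by push_cast at hc ⊢; linear_combination hc - hja
      exact_mod_cast this
    have e := EL h m' (j + m') (I n)
    rw [add_sub_cancel_right, hz, mul_zero] at e
    have key : ((m' : ℂ) - j) * cL B j (mul (L 0) (I n)) = 0 := by
      push_cast at e
      linear_combination -e
    exact (mul_eq_zero.mp key).resolve_left (csub_ne m' j hmj)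
  · have hz : cL B (j - k) (mul (L 0) (I n)) = 0 := by
      refine (mul_eq_zero.mp (b1 0 (j - k))).resolve_left ?_
      intro hc
      apply hk0
      have : (k : ℂ) = 0 := by push_cast at hc ⊢; linear_combination hja - hc
      exact_mod_cast this
    have e := EL h k j (I n)
    rw [hz, mul_zero] at e
    exact (mul_eq_zero.mp e).resolve_left (csub_ne k j fun hc => hjk hc.symm)

/-- `(m - j) * P m j = (2m - j) * α (j - m)` where `P m j = cL j (L0∘Lm)`, `α = P 0`. -/
lemma aP (m j : ℤ) :
    ((m : ℂ) - j) * cL B j (mul (L 0) (L m))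
      = (2 * (m : ℂ) - j) * cL B (j - m) (mul (L 0) (L 0)) := by
  have e := EL h m j (L 0)
  rwa [h.comm (L m) (L 0)] at e

lemma alpha_zero : cL B 0 (mul (L 0) (L 0)) = 0 := by
  have e := aP h 1 1
  norm_num at e
  exact e.symm

lemma alpha_ne (c : ℤ) (hc : c ≠ 0) : cL B c (mul (L 0) (L 0)) = 0 := by
  obtain ⟨m, hm0, hmc⟩ : ∃ m : ℤ, m ≠ 0 ∧ m ≠ c := by
    rcases eq_or_ne c (-1) with rfl | hcn
    · exact ⟨1, by norm_num, by norm_num⟩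
    · exact ⟨c + 1, by omega, by omega⟩
  -- fact1 : cL (2c) (L0 ∘ Lc) = 0
  have f1 : cL B (2 * c) (mul (L 0) (L c)) = 0 := by
    have e := aP h c (2 * c)
    rw [show 2 * c - c = c by ring] at e
    have key : (-(c : ℂ)) * cL B (2 * c) (mul (L 0) (L c)) = 0 := by
      push_cast at e
      linear_combination e
    have hcne : (-(c : ℂ)) ≠ 0 := by
      simpa using (fun hh => hc (by exact_mod_cast hh : c = 0))
    exact (mul_eq_zero.mp key).resolve_left hcne
  -- eq1 : cL (m+2c) (Lm ∘ Lc) = 0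
  have e1 : cL B (m + 2 * c) (mul (L m) (L c)) = 0 := by
    have e := EL h m (m + 2 * c) (L c)
    rw [show m + 2 * c - m = 2 * c by ring, f1, mul_zero] at e
    have key : (-(2 * (c : ℂ))) * cL B (m + 2 * c) (mul (L m) (L c)) = 0 := by
      push_cast at e
      linear_combination e
    have hcne : (-(2 * (c : ℂ))) ≠ 0 := by
      simp only [neg_ne_zero, mul_ne_zero_iff]
      exact ⟨two_ne_zero, fun hh => hc (by exact_mod_cast hh : c = 0)⟩
    exact (mul_eq_zero.mp key).resolve_left hcne
  -- eq2 : (c - m) * cL (m+c) (L0 ∘ Lm) = 0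
  have hZ : cL B (m + c) (mul (L 0) (L m)) = 0 := by
    have e := EL h c (m + 2 * c) (L m)
    rw [h.comm (L c) (L m), e1, show m + 2 * c - c = m + c by ring] at e
    have key : (m : ℂ) * cL B (m + c) (mul (L 0) (L m)) = 0 := by
      push_cast at e
      linear_combination e
    exact (mul_eq_zero.mp key).resolve_left
      (fun hh => hm0 (by exact_mod_cast hh : m = 0))
  -- fact2 with hZ gives α c = 0
  have e := aP h m (m + c)
  rw [hZ, mul_zero, show m + c - m = c by ring] at e
  have key : ((m : ℂ) - c) * cL B c (mul (L 0) (L 0)) = 0 := by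
    push_cast at e
    linear_combination -e
  exact (mul_eq_zero.mp key).resolve_left (csub_ne m c hmc)

lemma alpha_all (c : ℤ) : cL B c (mul (L 0) (L 0)) = 0 := by
  rcases eq_or_ne c 0 with rfl | hc
  · exact alpha_zero h
  · exact alpha_ne h c hc

lemma P_off (m j : ℤ) (hjm : j ≠ m) : cL B j (mul (L 0) (L m)) = 0 := by
  have e := aP h m j
  rw [alpha_all h (j - m), mul_zero] at e
  exact (mul_eq_zero.mp e).resolve_left (csub_ne m j fun hh => hjm hh.symm)

lemma s_rel (m k : ℤ) (hm : m ≠ 0) (hk : k ≠ 0) (hmk : m ≠ k) :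
    (m : ℂ) * cL B k (mul (L 0) (L k)) + (k : ℂ) * cL B m (mul (L 0) (L m)) = 0 := by
  have e1 := EL h m (m + k) (L k)
  rw [show m + k - m = k by ring, h.comm (L 0) (L k)] at e1
  have e2 := EL h k (m + k) (L m)
  rw [show m + k - k = m by ring, h.comm (L k) (L m), h.comm (L 0) (L m)] at e2
  have key : ((m : ℂ) - k) *
      ((m : ℂ) * cL B k (mul (L 0) (L k)) + (k : ℂ) * cL B m (mul (L 0) (L m))) = 0 := by
    rw [h.comm (L 0) (L k), h.comm (L 0) (L m)]
    push_cast at e1 e2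
    linear_combination (k : ℂ) * e2 - (m : ℂ) * e1
  exact (mul_eq_zero.mp key).resolve_left (csub_ne m k hmk)

lemma s_all (m : ℤ) : cL B m (mul (L 0) (L m)) = 0 := by
  have h21 := s_rel h 2 1 (by norm_num) (by norm_num) (by norm_num)
  have h31 := s_rel h 3 1 (by norm_num) (by norm_num) (by norm_num)
  have h32 := s_rel h 3 2 (by norm_num) (by norm_num) (by norm_num)
  have hs1 : cL B 1 (mul (L 0) (L 1)) = 0 := by
    push_cast at h21 h31 h32
    linear_combination (1/4 : ℂ) * h21 + (1/6 : ℂ) * h31 - (1/12 : ℂ) * h32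
  rcases eq_or_ne m 0 with rfl | hm0
  · exact alpha_zero h
  rcases eq_or_ne m 1 with rfl | hm1
  · exact hs1
  have e := s_rel h m 1 hm0 (by norm_num) hm1
  rw [hs1, mul_zero] at e
  have key : (1 : ℂ) * cL B m (mul (L 0) (L m)) = 0 := by push_cast at e; linear_combination e
  simpa using key

lemma P_all (m j : ℤ) : cL B j (mul (L 0) (L m)) = 0 := by
  rcases eq_or_ne j m with rfl | hjm
  · exact s_all h j
  · exact P_off h m j hjm

lemma AL_offm (m k j : ℤ) (hjm : j ≠ m) : cL B j (mul (L m) (L k)) = 0 := by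
  have e := EL h m j (L k)
  rw [P_all h k (j - m), mul_zero] at e
  exact (mul_eq_zero.mp e).resolve_left (csub_ne m j fun hh => hjm hh.symm)

lemma AL_offk (m k j : ℤ) (hjk : j ≠ k) : cL B j (mul (L m) (L k)) = 0 := by
  rw [h.comm (L m) (L k)]
  exact AL_offm h k m j hjk

lemma AL_all (m k j : ℤ) : cL B j (mul (L m) (L k)) = 0 := by
  rcases eq_or_ne j m with rfl | hjm
  swap
  · exact AL_offm h m k j hjm
  rcases eq_or_ne j k with rfl | hjk
  swap
  · exact AL_offk h j k j hjk
  -- full diagonal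
  obtain ⟨m', n', hmn, hm0, hn0, hsum⟩ := exists_split j
  have e := congrArg (cL B j) (S1 h m' n' (L j))
  rw [hsum] at e
  simp only [map_smul, smul_eq_mul, map_sub, cL_br_L h] at e
  rw [show j - m' = n' by omega, show j - n' = m' by omega,
    AL_offk h n' j n' (by omega), AL_offk h m' j m' (by omega), mul_zero, mul_zero] at e
  have key : ((m' : ℂ) - n') * cL B j (mul (L j) (L j)) = 0 := by
    push_cast at e
    linear_combination e
  exact (mul_eq_zero.mp key).resolve_left (csub_ne m' n' hmn)

/-- If all `L`-coordinates of `x` vanish then `⁅I n, x⁆ = 0`. -/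
lemma I_br_zero (n : ℤ) (x : W) (hx : ∀ t, cL B t x = 0) : ⁅I n, x⁆ = 0 := by
  refine ext_zero (B := B) _ (fun j => ?_) (fun j => ?_)
  · exact cL_br_I h n j x
  · rw [cI_br_I h n j x, hx (j - n), mul_zero]

/-- `F^A`. -/
lemma FA (n j : ℤ) (z : W) (hz : ∀ t, cL B t (mul (L 0) z) = 0) (hjn : j ≠ n) :
    cI B j (mul (I n) z) = 0 := by
  have s2 := S2 h 0 n z
  rw [I_br_zero h n (mul (L 0) z) hz, sub_zero, zero_add] at s2
  have e := congrArg (cI B j) s2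
  simp only [map_smul, smul_eq_mul, cI_br_L h, sub_zero] at e
  have key : ((j : ℂ) - n) * cI B j (mul (I n) z) = 0 := by
    push_cast at e
    linear_combination e
  exact (mul_eq_zero.mp key).resolve_left (csub_ne j n hjn)

/-- Off-diagonal `I∘I` vanishes as an element. -/
lemma II_ne (n k : ℤ) (hnk : n ≠ k) : mul (I n) (I k) = 0 := by
  refine ext_zero (B := B) _ (fun j => cL_II h n k j) (fun j => ?_)
  rcases eq_or_ne j n with rfl | hjn
  · rw [h.comm (I j) (I k)]
    exact FA h k j (I j) (fun t => cL_LI h 0 j t) hnk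
  · exact FA h n j (I k) (fun t => cL_LI h 0 k t) hjn

/-- `B`-values: `cI j (L k ∘ I n) = 0` for `j ≠ n`. -/
lemma BIA (k n j : ℤ) (hjn : j ≠ n) : cI B j (mul (L k) (I n)) = 0 := by
  rw [h.comm (L k) (I n)]
  exact FA h n j (L k) (fun t => AL_all h 0 k t) hjn

/-- `L k ∘ I n = 0`. -/
lemma LI_zero (k n : ℤ) : mul (L k) (I n) = 0 := by
  refine ext_zero (B := B) _ (fun j => cL_LI h k n j) (fun j => ?_)
  rcases eq_or_ne j n with rfl | hjn
  swap
  · exact BIA h k n j hjn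
  obtain ⟨m', n', hmn, hm0, hn0, hsum⟩ := exists_split k
  have e := congrArg (cI B j) (S1 h m' n' (I j))
  rw [hsum] at e
  simp only [map_smul, smul_eq_mul, map_sub, cI_br_L h] at e
  rw [BIA h n' j (j - m') (by omega), BIA h m' j (j - n') (by omega),
    mul_zero, mul_zero] at e
  have key : ((m' : ℂ) - n') * cI B j (mul (L k) (I j)) = 0 := by
    push_cast at e
    linear_combination e
  exact (mul_eq_zero.mp key).resolve_left (csub_ne m' n' hmn)

/-- `I n ∘ I n = 0`. -/
lemma II_diag (n : ℤ) : mul (I n) (I n) = 0 := by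
  refine ext_zero (B := B) _ (fun j => cL_II h n n j) (fun j => ?_)
  rcases eq_or_ne j n with rfl | hjn
  swap
  · exact FA h n j (I n) (fun t => cL_LI h 0 n t) hjn
  -- j = n (the variable is now called j)
  have e1 := congrArg (cI B (1 + j)) (S2 h 1 j (I j))
  rw [II_ne h (1 + j) j (by omega)] at e1
  simp only [map_smul, map_zero, smul_eq_mul, mul_zero, map_sub, cI_br_L h,
    LI_zero h 1 j, lie_zero, sub_zero, add_sub_cancel_left] at e1
  have e2 := congrArg (cI B j) (S2 h 1 (j - 1) (I j))
  rw [show (1 : ℤ) + (j - 1) = j by ring, II_ne h (j - 1) j (by omega),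
    LI_zero h 1 j] at e2
  simp only [map_smul, map_zero, smul_eq_mul, mul_zero, map_sub, cI_br_L h,
    lie_zero, sub_zero, zero_sub, neg_eq_zero] at e2
  push_cast at e1 e2
  linear_combination e2 + e1

/-- `x ∘ I n = 0` for every `x`. -/
lemma any_I_zero (x : W) (n : ℤ) : mul x (I n) = 0 := by
  have key : mul.flip (I n) = 0 := by
    apply B.ext
    rintro (t | t) <;> simp only [LinearMap.flip_apply, LinearMap.zero_apply, h.hBL, h.hBI]
    · exact LI_zero h t n
    · rcases eq_or_ne t n with rfl | htn
      · exact II_diag h t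
      · exact II_ne h t n htn
  have := congrArg (fun f : W →ₗ[ℂ] W => f x) key
  simpa using this

/-- If all `L`-coordinates of `w` vanish then `x ∘ w = 0`. -/
lemma mul_val_zero (x w : W) (hw : ∀ t, cL B t w = 0) : mul x w = 0 := by
  have hrepr : mul x w = (B.repr w).sum fun i c => c • mul x (B i) := by
    conv_lhs => rw [← B.linearCombination_repr w, Finsupp.linearCombination_apply, map_finsuppSum]
    exact Finsupp.sum_congr fun i _ => by rw [map_smul]
  rw [hrepr, Finsupp.sum]
  apply Finset.sum_eq_zero
  rintro (t | t) _
  · have : B.repr w (Sum.inl t) = 0 := hw t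
    rw [this, zero_smul]
  · rw [h.hBI, any_I_zero h x t, smul_zero]

/-- `L m ∘ L k = 0`. -/
lemma LL_zero (m k : ℤ) : mul (L m) (L k) = 0 := by
  suffices key : ∀ m' n' k' : ℤ, m' ≠ n' → mul (L (m' + n')) (L k') = 0 by
    obtain ⟨m', n', hmn, _, _, hsum⟩ := exists_split m
    rw [← hsum]
    exact key m' n' k hmn
  intro m' n' k' hmn
  have hss := starstar h (L m') (L n') (L k')
  rw [mul_val_zero h (L m') (mul (L n') (L k')) (fun t => AL_all h n' k' t),
    mul_val_zero h (L n') (mul (L m') (L k')) (fun t => AL_all h m' k' t),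
    sub_zero] at hss
  have e0 : ((m' - n' : ℤ) : ℂ) • mul (L (m' + n')) (L k') = 0 := by
    rw [S1 h m' n' (L k'), ← hss]
  rcases smul_eq_zero.mp e0 with hcoef | hval
  · exact absurd (by exact_mod_cast hcoef : m' - n' = 0) (by omega)
  · exact hval

/-- The product vanishes identically. -/
theorem main : ∀ x y : W, mul x y = 0 := by
  have key : mul = 0 := by
    apply B.ext
    rintro (t | t) <;> apply B.ext <;> rintro (t' | t') <;>
      simp only [LinearMap.zero_apply, h.hBL, h.hBI]
    · exact LL_zero h t t'
    · exact LI_zero h t t'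
    · rw [h.comm]; exact LI_zero h t' t
    · rcases eq_or_ne t t' with rfl | htt
      · exact II_diag h t
      · exact II_ne h t t' htt
  intro x y
  rw [key]
  rfl

end
end CPAWab

/-- Every commutative post-Lie algebra structure on `W(a,b)` is trivial. -/
theorem commPostLie_Wab_trivial (a b : ℂ) {W : Type*} [LieRing W] [LieAlgebra ℂ W]
    (L I : ℤ → W) (hW : IsWab a b W L I) (mul : W →ₗ[ℂ] W →ₗ[ℂ] W)
    (hcomm : ∀ x y : W, mul x y = mul y x)
    (hpost1 : ∀ x y z : W, mul ⁅x, y⁆ z = mul x (mul y z) - mul y (mul x z))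
    (hpost2 : ∀ x y z : W, mul x ⁅y, z⁆ = ⁅mul x y, z⁆ + ⁅y, mul x z⁆) :
    ∀ x y : W, mul x y = 0 := by
  obtain ⟨B, hBL, hBI⟩ := hW.basis
  exact CPAWab.main
    ⟨hW.bracket_LL, hW.bracket_LI, hW.bracket_II, hBL, hBI, hcomm, hpost1, hpost2⟩
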